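/- For n ≥ 2, the convex hull of the set Sₙ \ {0} = {x₁, ..., x_{n+1}} (where xᵢ = -e_{n-i+1} + Σ_{j=n-i+2}^{n} e_j for 1 ≤ i ≤ n and x_{n+1} = (1,...,1)) contains an open ball around the origin; consequently Sₙ \ {0} is not contained in any open half-space {x : ⟨v,x⟩ > 0} with v ≠ 0. -/

import Mathlib

open scoped RealInnerProductSpace

/-- For `1 ≤ i ≤ n`, the vector `xᵢ = -e_{n-i+1} + Σ_{j=n-i+2}^n e_j`; for `i = n+1`
this gives the all-ones vector `(1,…,1)`.  (Coordinates are 0-indexed: coordinate `t`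
is `0` if `t + i < n`, `-1` if `t + i = n`, and `1` if `t + i > n`.) -/
def xvec (n : ℕ) (i : ℕ) : EuclideanSpace ℝ (Fin n) := WithLp.toLp 2 fun t =>
  if (t : ℕ) + i < n then 0 else if (t : ℕ) + i = n then -1 else 1

/-- The set `Sₙ \ {0} = {x₁, …, x_{n+1}}`. -/
def Sset' (n : ℕ) : Set (EuclideanSpace ℝ (Fin n)) :=
  {y | ∃ i : ℕ, 1 ≤ i ∧ i ≤ n + 1 ∧ y = xvec n i}

/-- The family `x₁, …, x_{n+1}` indexed by `Fin (n+1)`. -/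
def bfam (n : ℕ) : Fin (n + 1) → EuclideanSpace ℝ (Fin n) := fun i => xvec n ((i : ℕ) + 1)

lemma range_bfam (n : ℕ) : Set.range (bfam n) = Sset' n := by
  ext y
  constructor
  · rintro ⟨i, rfl⟩
    exact ⟨(i : ℕ) + 1, by omega, by omega, rfl⟩
  · rintro ⟨i, h1, h2, rfl⟩
    refine ⟨⟨i - 1, by omega⟩, ?_⟩
    have hi : i - 1 + 1 = i := by omega
    show xvec n ((i - 1) + 1) = xvec n i
    rw [hi]

/-- The weights of the convex combination expressing `0`. -/
noncomputable def wnat (n : ℕ) : ℕ → ℝ :=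
  fun i => if i = n then (2 : ℝ)⁻¹ ^ n else (2 : ℝ)⁻¹ ^ (i + 1)

lemma wnat_pos (n i : ℕ) : 0 < wnat n i := by
  unfold wnat; split <;> positivity

lemma sum_half_pow (m : ℕ) :
    ∑ i ∈ Finset.range m, (2 : ℝ)⁻¹ ^ (i + 1) = 1 - (2 : ℝ)⁻¹ ^ m := by
  induction m with
  | zero => simp
  | succ m ih => rw [Finset.sum_range_succ, ih, pow_succ]; ring

lemma sum_wnat (n : ℕ) : ∑ i ∈ Finset.range (n + 1), wnat n i = 1 := by
  rw [Finset.sum_range_succ]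
  have h1 : ∑ i ∈ Finset.range n, wnat n i
      = ∑ i ∈ Finset.range n, (2 : ℝ)⁻¹ ^ (i + 1) := by
    refine Finset.sum_congr rfl fun i hi => ?_
    have : i ≠ n := (Finset.mem_range.mp hi).ne
    simp [wnat, this]
  rw [h1, sum_half_pow]
  simp [wnat]

lemma sum_w (n : ℕ) : ∑ i : Fin (n + 1), wnat n (i : ℕ) = 1 := by
  rw [Fin.sum_univ_eq_sum_range]; exact sum_wnat n

lemma sum_G (n k : ℕ) (hk : k < n) :
    ∑ i ∈ Finset.range (n + 1),
      wnat n i * (if i < k then 0 else if i = k then (-1 : ℝ) else 1) = 0 := by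
  have hsub : Finset.Ico k (n + 1) ⊆ Finset.range (n + 1) := by
    intro i hi
    simp only [Finset.mem_Ico] at hi
    exact Finset.mem_range.mpr hi.2
  rw [← Finset.sum_subset hsub (by
    intro i hi hni
    simp only [Finset.mem_Ico, Finset.mem_range, not_and, not_le, not_lt] at hi hni
    have : i < k := by omega
    simp [this])]
  rw [Finset.sum_eq_sum_Ico_succ_bot (by omega : k < n + 1)]
  have htail : ∑ i ∈ Finset.Ico (k + 1) (n + 1),
      wnat n i * (if i < k then 0 else if i = k then (-1 : ℝ) else 1)
      = ∑ i ∈ Finset.Ico (k + 1) (n + 1), wnat n i := by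
    refine Finset.sum_congr rfl fun i hi => ?_
    simp only [Finset.mem_Ico] at hi
    have h1 : ¬ i < k := by omega
    have h2 : i ≠ k := by omega
    simp [h1, h2]
  rw [htail, Finset.sum_Ico_succ_top (by omega : k + 1 ≤ n)]
  have hmid : ∑ i ∈ Finset.Ico (k + 1) n, wnat n i
      = ∑ i ∈ Finset.Ico (k + 1) n, (2 : ℝ)⁻¹ ^ (i + 1) := by
    refine Finset.sum_congr rfl fun i hi => ?_
    simp only [Finset.mem_Ico] at hi
    have : i ≠ n := by omega
    simp [wnat, this]
  rw [hmid, Finset.sum_Ico_eq_sub _ (by omega : k + 1 ≤ n), sum_half_pow, sum_half_pow]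
  have e1 : wnat n k = (2 : ℝ)⁻¹ ^ (k + 1) := by simp [wnat, hk.ne]
  have e2 : wnat n n = (2 : ℝ)⁻¹ ^ n := by simp [wnat]
  rw [e1, e2, if_neg (lt_irrefl k), if_pos rfl]
  ring

lemma combo_zero (n : ℕ) :
    ∑ i : Fin (n + 1), wnat n (i : ℕ) • bfam n i = 0 := by
  ext t
  have ht : (t : ℕ) < n := t.2
  set k : ℕ := n - 1 - (t : ℕ) with hk
  have hkn : k < n := by omega
  have happ : (∑ i : Fin (n + 1), wnat n (i : ℕ) • bfam n i) t
      = ∑ i : Fin (n + 1), wnat n (i : ℕ) * bfam n i t := by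
    rw [WithLp.ofLp_sum, Finset.sum_apply]; rfl
  rw [happ]
  have hstep : ∀ i : Fin (n + 1), wnat n (i : ℕ) * bfam n i t
      = wnat n (i : ℕ) * (if (i : ℕ) < k then 0 else if (i : ℕ) = k then (-1 : ℝ) else 1) := by
    intro i
    congr 1
    show (if (t : ℕ) + ((i : ℕ) + 1) < n then (0:ℝ)
        else if (t : ℕ) + ((i : ℕ) + 1) = n then -1 else 1) = _
    rcases lt_trichotomy (i : ℕ) k with h | h | h
    · have h1 : (t : ℕ) + ((i : ℕ) + 1) < n := by omega
      simp [h1, h]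
    · have h1 : ¬ (t : ℕ) + ((i : ℕ) + 1) < n := by omega
      have h2 : (t : ℕ) + ((i : ℕ) + 1) = n := by omega
      rw [if_neg h1, if_pos h2, ← h]
      simp
    · have h1 : ¬ (t : ℕ) + ((i : ℕ) + 1) < n := by omega
      have h2 : (t : ℕ) + ((i : ℕ) + 1) ≠ n := by omega
      have h3 : ¬ (i : ℕ) < k := by omega
      have h4 : (i : ℕ) ≠ k := by omega
      simp [h1, h2, h3, h4]
  rw [Finset.sum_congr rfl fun i _ => hstep i]
  rw [Fin.sum_univ_eq_sum_range
    (fun i => wnat n i * (if i < k then 0 else if i = k then (-1 : ℝ) else 1))]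
  show _ = (0 : EuclideanSpace ℝ (Fin n)) t
  rw [sum_G n k hkn]
  rfl

/-- The matrix of differences `xᵢ - x_{n+1}`, `1 ≤ i ≤ n`. -/
noncomputable def dmat (n : ℕ) : Matrix (Fin n) (Fin n) ℝ :=
  Matrix.of fun i t => bfam n (Fin.castSucc i) t - bfam n (Fin.last n) t

lemma dmat_apply (n : ℕ) (i t : Fin n) :
    dmat n i t = if (t : ℕ) + ((i : ℕ) + 1) < n then (-1 : ℝ)
      else if (t : ℕ) + ((i : ℕ) + 1) = n then -2 else 0 := by
  have hl : bfam n (Fin.last n) t = 1 := by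
    show (if (t : ℕ) + (n + 1) < n then (0:ℝ) else if (t : ℕ) + (n + 1) = n then -1 else 1) = 1
    have h1 : ¬ (t : ℕ) + (n + 1) < n := by omega
    have h2 : (t : ℕ) + (n + 1) ≠ n := by omega
    simp [h1, h2]
  show bfam n (Fin.castSucc i) t - bfam n (Fin.last n) t = _
  rw [hl]
  show (if (t : ℕ) + ((i : ℕ) + 1) < n then (0:ℝ)
      else if (t : ℕ) + ((i : ℕ) + 1) = n then -1 else 1) - 1 = _
  split_ifs <;> norm_num

lemma dmat_isUnit (n : ℕ) : IsUnit (dmat n) := by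
  rw [Matrix.isUnit_iff_isUnit_det, isUnit_iff_ne_zero]
  have hN : ((dmat n).submatrix (Fin.revPerm : Equiv.Perm (Fin n)) id).det = (-2 : ℝ) ^ n := by
    rw [Matrix.det_of_lowerTriangular _ ?ht]
    case ht =>
      intro j t h
      have hlt : (j : ℕ) < (t : ℕ) := h
      show dmat n (Fin.rev j) t = 0
      rw [dmat_apply, Fin.val_rev]
      have hjn : (j : ℕ) < n := j.2
      have htn : (t : ℕ) < n := t.2
      have h1 : ¬ (t : ℕ) + (n - ((j : ℕ) + 1) + 1) < n := by omega
      have h2 : (t : ℕ) + (n - ((j : ℕ) + 1) + 1) ≠ n := by omega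
      rw [if_neg h1, if_neg h2]
    have hdiag : ∀ j : Fin n,
        ((dmat n).submatrix (Fin.revPerm : Equiv.Perm (Fin n)) id) j j = (-2 : ℝ) := by
      intro j
      show dmat n (Fin.rev j) j = -2
      rw [dmat_apply, Fin.val_rev]
      have hjn : (j : ℕ) < n := j.2
      have h2 : (j : ℕ) + (n - ((j : ℕ) + 1) + 1) = n := by omega
      have h1 : ¬ (j : ℕ) + (n - ((j : ℕ) + 1) + 1) < n := by omega
      rw [if_neg h1, if_pos h2]
    rw [Finset.prod_congr rfl fun j _ => hdiag j]
    simp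
  have hperm := Matrix.det_permute (Fin.revPerm : Equiv.Perm (Fin n)) (dmat n)
  rw [hN] at hperm
  intro h0
  rw [h0, mul_zero] at hperm
  have : ((-2 : ℝ)) ^ n ≠ 0 := by positivity
  exact this hperm

def fin_equiv (n : ℕ) : Fin n ≃ {i : Fin (n + 1) // i ≠ Fin.last n} where
  toFun j := ⟨Fin.castSucc j, (Fin.castSucc_lt_last j).ne⟩
  invFun i := Fin.castPred i.1 i.2
  left_inv j := by simp
  right_inv i := by simp

lemma bfam_affineIndependent (n : ℕ) : AffineIndependent ℝ (bfam n) := by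
  rw [affineIndependent_iff_linearIndependent_vsub ℝ (bfam n) (Fin.last n)]
  rw [← linearIndependent_equiv (fin_equiv n)]
  have hrows : LinearIndependent ℝ (fun i : Fin n => dmat n i) :=
    Matrix.linearIndependent_rows_iff_isUnit.mpr (dmat_isUnit n)
  have hE : LinearIndependent ℝ
      (fun i : Fin n => ((WithLp.linearEquiv 2 ℝ (Fin n → ℝ)).symm (dmat n i))) :=
    hrows.map' _ (WithLp.linearEquiv 2 ℝ (Fin n → ℝ)).symm.ker
  exact hE

theorem stmt18 {n : ℕ} (hn : 2 ≤ n) :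
    (∃ ε : ℝ, 0 < ε ∧ Metric.ball (0 : EuclideanSpace ℝ (Fin n)) ε ⊆
      convexHull ℝ (Sset' n)) ∧
    ∀ v : EuclideanSpace ℝ (Fin n), v ≠ 0 → ¬ (∀ y ∈ Sset' n, 0 < ⟪v, y⟫) := by
  have hspan : affineSpan ℝ (Set.range (bfam n)) = ⊤ := by
    rw [(bfam_affineIndependent n).affineSpan_eq_top_iff_card_eq_finrank_add_one]
    simp [finrank_euclideanSpace]
  let B : AffineBasis (Fin (n + 1)) ℝ (EuclideanSpace ℝ (Fin n)) :=
    ⟨bfam n, bfam_affineIndependent n, hspan⟩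
  have hsum1 : Finset.univ.sum (fun i : Fin (n + 1) => wnat n (i : ℕ)) = 1 := sum_w n
  have hcomb : Finset.univ.affineCombination ℝ (bfam n) (fun i : Fin (n+1) => wnat n (i : ℕ))
      = 0 := by
    rw [Finset.affineCombination_eq_linear_combination _ _ _ hsum1]
    exact combo_zero n
  have hcoord : ∀ i, B.coord i 0 = wnat n (i : ℕ) := by
    intro i
    rw [← hcomb]
    exact B.coord_apply_combination_of_mem (Finset.mem_univ i) hsum1
  have hmem : (0 : EuclideanSpace ℝ (Fin n)) ∈ interior (convexHull ℝ (Sset' n)) := by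
    rw [← range_bfam n]
    have hr : Set.range (bfam n) = Set.range ⇑B := rfl
    rw [hr, B.interior_convexHull]
    intro i
    rw [hcoord i]
    exact wnat_pos n _
  obtain ⟨ε, hε, hball⟩ := Metric.isOpen_iff.mp isOpen_interior 0 hmem
  have hballhull : Metric.ball (0 : EuclideanSpace ℝ (Fin n)) ε ⊆ convexHull ℝ (Sset' n) :=
    fun x hx => interior_subset (hball hx)
  refine ⟨⟨ε, hε, hballhull⟩, ?_⟩
  intro v hv hall
  have hvpos : (0 : ℝ) < ‖v‖ := norm_pos_iff.mpr hv
  set p : EuclideanSpace ℝ (Fin n) := (-(ε / 2 / ‖v‖)) • v with hp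
  have hpball : p ∈ Metric.ball (0 : EuclideanSpace ℝ (Fin n)) ε := by
    rw [Metric.mem_ball, dist_zero_right, hp, norm_smul]
    have : ‖(-(ε / 2 / ‖v‖))‖ = ε / 2 / ‖v‖ := by
      rw [norm_neg, Real.norm_eq_abs, abs_of_pos (by positivity)]
    rw [this]
    rw [div_mul_cancel₀ _ hvpos.ne']
    linarith
  have hlin : IsLinearMap ℝ (fun x : EuclideanSpace ℝ (Fin n) => ⟪v, x⟫) :=
    ⟨fun x y => inner_add_right v x y, fun c x => real_inner_smul_right v x c⟩
  have hsub : convexHull ℝ (Sset' n) ⊆ {x : EuclideanSpace ℝ (Fin n) | 0 ≤ ⟪v, x⟫} :=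
    convexHull_min (fun y hy => (hall y hy).le) (convex_halfSpace_ge hlin 0)
  have h0 : 0 ≤ ⟪v, p⟫ := hsub (hballhull hpball)
  rw [hp, real_inner_smul_right, real_inner_self_eq_norm_sq] at h0
  have : (ε / 2 / ‖v‖) * ‖v‖ ^ 2 > 0 := by positivity
  linarith
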